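/- Let S be a virtual flat biquandle. Then for all a, b in S there exist x, y in S with x = b∘y, y = a∘x, b = x*a, a = y*b, namely x = b∘a and y = a∘b; moreover (a∘b)*(b*a) = a and (b*a)∘(a∘b) = b. -/
import Mathlib


/-- A virtual flat biquandle: a set with two binary operations
`star a b = S_b(a)` and `circ a b = T_b(a)` satisfying
(i) `S_a S_b = S_b S_a`, `T_a T_b = T_b T_a`, `S_a T_b = T_b S_a`;
(ii) `S_a = S_{T_b(a)} = S_{S_b(a)}`, `T_a = T_{S_b(a)} = T_{T_b(a)}`;
(iii) `T_a S_a = S_a T_a = id`. -/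
structure VFB (S : Type*) where
  star : S → S → S
  circ : S → S → S
  star_star_comm : ∀ a b x, star (star x b) a = star (star x a) b
  circ_circ_comm : ∀ a b x, circ (circ x b) a = circ (circ x a) b
  star_circ_comm : ∀ a b x, star (circ x b) a = circ (star x a) b
  star_circ_invar : ∀ a b x, star x (circ a b) = star x a
  star_star_invar : ∀ a b x, star x (star a b) = star x a
  circ_star_invar : ∀ a b x, circ x (star a b) = circ x a
  circ_circ_invar : ∀ a b x, circ x (circ a b) = circ x a
  circ_star : ∀ a x, circ (star x a) a = x
  star_circ : ∀ a x, star (circ x a) a = x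

theorem stmt_8 {S : Type*} (V : VFB S) (a b : S) :
    (∃ x y : S, x = V.circ b y ∧ y = V.circ a x ∧ b = V.star x a ∧ a = V.star y b ∧
      x = V.circ b a ∧ y = V.circ a b) ∧
    V.star (V.circ a b) (V.star b a) = a ∧
    V.circ (V.star b a) (V.circ a b) = b := by
  refine ⟨⟨V.circ b a, V.circ a b, ?_, ?_, ?_, ?_, rfl, rfl⟩, ?_, ?_⟩
  · rw [V.circ_circ_invar]
  · rw [V.circ_circ_invar]
  · rw [V.star_circ]
  · rw [V.star_circ]
  · rw [V.star_star_invar, V.star_circ]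
  · rw [V.circ_circ_invar, V.circ_star]
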